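/- Let fᵢ : R^d → R (i ∈ [N]) have L-Lipschitz gradients, and suppose client i runs K local gradient steps x_{k+1}^i = x_k^i − η∇fᵢ(x_k^i) from common initialization x₀ with η ≤ 1/(3KL). Then (η η_g /(2N)) L² ∑_{i=1}^N ∑_{k=0}^{K−1} ‖x_k^i − x₀‖² ≤ (9/4) η³ η_g L² K³ σ_g² + (η η_g K/4) ‖∇f(x₀)‖², where f = (1/N)∑ᵢ fᵢ and ‖∇fᵢ(x) − ∇f(x)‖² ≤ σ_g² for all i, x. -/

import Mathlib

open Finset

set_option maxHeartbeats 1000000 in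
/-- Bound on the accumulated local drift of client iterates under the
bounded global variance assumption. -/
theorem local_drift_bound (d N K : ℕ) (hN : 0 < N) (hK : 0 < K)
    (L η ηg σg : ℝ) (hL : 0 < L) (hη : 0 < η) (hηg : 0 < ηg)
    (hηle : η ≤ 1 / (3 * K * L))
    (f : Fin N → EuclideanSpace ℝ (Fin d) → ℝ)
    (hdiff : ∀ i, Differentiable ℝ (f i))
    (hlip : ∀ i x y, ‖gradient (f i) x - gradient (f i) y‖ ≤ L * ‖x - y‖)
    (F : EuclideanSpace ℝ (Fin d) → ℝ)
    (hF : F = fun x => (N : ℝ)⁻¹ * ∑ i, f i x)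
    (hvar : ∀ i x, ‖gradient (f i) x - gradient F x‖ ^ 2 ≤ σg ^ 2)
    (x0 : EuclideanSpace ℝ (Fin d))
    (x : Fin N → ℕ → EuclideanSpace ℝ (Fin d))
    (hinit : ∀ i, x i 0 = x0)
    (hstep : ∀ i, ∀ k < K, x i (k + 1) = x i k - η • gradient (f i) (x i k)) :
    η * ηg / (2 * N) * L ^ 2 * ∑ i, ∑ k ∈ range K, ‖x i k - x0‖ ^ 2
      ≤ 9 / 4 * η ^ 3 * ηg * L ^ 2 * (K : ℝ) ^ 3 * σg ^ 2
        + η * ηg * K / 4 * ‖gradient F x0‖ ^ 2 := by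
  set σ : ℝ := |σg| with hσdef
  set G : ℝ := ‖gradient F x0‖ with hGdef
  have hσ0 : 0 ≤ σ := abs_nonneg _
  have hG0 : 0 ≤ G := norm_nonneg _
  have hK1 : (1:ℝ) ≤ (K:ℝ) := by exact_mod_cast hK
  have hKL : 3 * η * (K:ℝ) * L ≤ 1 := by
    rw [le_div_iff₀ (by positivity)] at hηle
    nlinarith
  have hvar' : ∀ i, ‖gradient (f i) x0 - gradient F x0‖ ≤ σ := by
    intro i
    have h := hvar i x0
    nlinarith [norm_nonneg (gradient (f i) x0 - gradient F x0), sq_abs σg]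
  have key : ∀ i, ∀ k, k ≤ K → ‖x i k - x0‖ ≤ 3/2 * k * η * (σ + G) := by
    intro i k
    induction k with
    | zero =>
      intro _
      simp [hinit i]
    | succ k ih =>
      intro hk1
      have hkK : k < K := hk1
      have ihk := ih (le_of_lt hkK)
      have hkKr : (k:ℝ) ≤ (K:ℝ) := by exact_mod_cast le_of_lt hkK
      have hgrad : ‖gradient (f i) (x i k)‖ ≤ L * ‖x i k - x0‖ + σ + G := by
        have hdec : gradient (f i) (x i k)
            = (gradient (f i) (x i k) - gradient (f i) x0)
              + (gradient (f i) x0 - gradient F x0) + gradient F x0 := by abel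
        calc ‖gradient (f i) (x i k)‖
            ≤ ‖gradient (f i) (x i k) - gradient (f i) x0‖
              + ‖gradient (f i) x0 - gradient F x0‖ + ‖gradient F x0‖ := by
              conv_lhs => rw [hdec]
              exact (norm_add_le _ _).trans (add_le_add_left (norm_add_le _ _) _)
          _ ≤ L * ‖x i k - x0‖ + σ + G :=
              add_le_add (add_le_add (hlip i _ _) (hvar' i)) le_rfl
      have hnorm : ‖x i (k+1) - x0‖ ≤ ‖x i k - x0‖ + η * ‖gradient (f i) (x i k)‖ := by
        rw [hstep i k hkK]
        have : x i k - η • gradient (f i) (x i k) - x0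
            = (x i k - x0) - η • gradient (f i) (x i k) := by abel
        rw [this]
        calc ‖(x i k - x0) - η • gradient (f i) (x i k)‖
            ≤ ‖x i k - x0‖ + ‖η • gradient (f i) (x i k)‖ := norm_sub_le _ _
          _ = ‖x i k - x0‖ + η * ‖gradient (f i) (x i k)‖ := by
              rw [norm_smul, Real.norm_eq_abs, abs_of_pos hη]
      have hnn : (0:ℝ) ≤ ‖x i k - x0‖ := norm_nonneg _
      have hA : η * L * ‖x i k - x0‖ ≤ 3/2 * (η * L * (k:ℝ)) * (η * (σ + G)) := by
        have := mul_le_mul_of_nonneg_left ihk (mul_nonneg hη.le hL.le)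
        nlinarith
      have hB : η * L * (k:ℝ) ≤ 1/3 := by
        have := mul_le_mul_of_nonneg_left hkKr (mul_nonneg hη.le hL.le)
        nlinarith
      have hC : 3/2 * (η * L * (k:ℝ)) * (η * (σ + G)) ≤ 1/2 * (η * (σ + G)) := by
        have hp : (0:ℝ) ≤ η * (σ + G) := by positivity
        nlinarith [mul_le_mul_of_nonneg_right hB hp]
      have hD : η * ‖gradient (f i) (x i k)‖ ≤ η * L * ‖x i k - x0‖ + η * (σ + G) := by
        have := mul_le_mul_of_nonneg_left hgrad hη.le
        nlinarith
      rw [Nat.cast_add_one]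
      linarith [ihk, hnorm, hA, hC, hD]
  have hsum : ∑ i, ∑ k ∈ range K, ‖x i k - x0‖ ^ 2
      ≤ (N:ℝ) * ((K:ℝ) * (3/2 * (K:ℝ) * η * (σ + G)) ^ 2) := by
    have hterm : ∀ i : Fin N, ∑ k ∈ range K, ‖x i k - x0‖ ^ 2
        ≤ (K:ℝ) * (3/2 * (K:ℝ) * η * (σ + G)) ^ 2 := by
      intro i
      calc ∑ k ∈ range K, ‖x i k - x0‖ ^ 2
          ≤ ∑ k ∈ range K, (3/2 * (K:ℝ) * η * (σ + G)) ^ 2 := by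
            apply Finset.sum_le_sum
            intro k hk
            have hkK : k ≤ K := le_of_lt (Finset.mem_range.mp hk)
            have h1 := key i k hkK
            have hkKr : (k:ℝ) ≤ (K:ℝ) := by exact_mod_cast hkK
            have h2 : ‖x i k - x0‖ ≤ 3/2 * (K:ℝ) * η * (σ + G) := by
              refine h1.trans ?_
              have : (0:ℝ) ≤ η * (σ + G) := by positivity
              nlinarith
            exact pow_le_pow_left₀ (norm_nonneg _) h2 2
        _ = (K:ℝ) * (3/2 * (K:ℝ) * η * (σ + G)) ^ 2 := by
            rw [Finset.sum_const, Finset.card_range, nsmul_eq_mul]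
    calc ∑ i, ∑ k ∈ range K, ‖x i k - x0‖ ^ 2
        ≤ ∑ _i : Fin N, (K:ℝ) * (3/2 * (K:ℝ) * η * (σ + G)) ^ 2 :=
          Finset.sum_le_sum fun i _ => hterm i
      _ = (N:ℝ) * ((K:ℝ) * (3/2 * (K:ℝ) * η * (σ + G)) ^ 2) := by
          rw [Finset.sum_const, Finset.card_univ, Fintype.card_fin, nsmul_eq_mul]
  have hNr : (0:ℝ) < (N:ℝ) := by exact_mod_cast hN
  have hcoef : (0:ℝ) ≤ η * ηg / (2 * N) * L ^ 2 := by positivity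
  have h1 := mul_le_mul_of_nonneg_left hsum hcoef
  refine le_trans h1 ?_
  have heq : η * ηg / (2 * N) * L ^ 2 * ((N:ℝ) * ((K:ℝ) * (3/2 * (K:ℝ) * η * (σ + G)) ^ 2))
      = 9/8 * η^3 * ηg * L^2 * (K:ℝ)^3 * (σ + G)^2 := by
    field_simp
    ring
  rw [heq]
  have hσsq : σ ^ 2 = σg ^ 2 := sq_abs σg
  have hKpos : (0:ℝ) < (K:ℝ) := by exact_mod_cast hK
  -- split into σ part and G part
  have hGpart : 9/8 * η^3 * ηg * L^2 * (K:ℝ)^3 * (2 * G^2)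
      ≤ η * ηg * (K:ℝ) / 4 * G ^ 2 := by
    have ht0 : (0:ℝ) ≤ 3 * η * (K:ℝ) * L := by positivity
    have h9 : 9 * η^2 * L^2 * (K:ℝ)^2 ≤ 1 := by
      nlinarith [mul_le_mul hKL hKL ht0 (by norm_num : (0:ℝ) ≤ 1)]
    have hpos : (0:ℝ) ≤ η * ηg * (K:ℝ) * G ^ 2 / 4 := by positivity
    nlinarith [mul_le_mul_of_nonneg_right h9 hpos]
  have hcross : (σ + G)^2 ≤ 2 * σ^2 + 2 * G^2 := by nlinarith [sq_nonneg (σ - G)]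
  have hcpos : (0:ℝ) ≤ 9/8 * η^3 * ηg * L^2 * (K:ℝ)^3 := by positivity
  calc 9/8 * η^3 * ηg * L^2 * (K:ℝ)^3 * (σ + G)^2
      ≤ 9/8 * η^3 * ηg * L^2 * (K:ℝ)^3 * (2 * σ^2 + 2 * G^2) :=
        mul_le_mul_of_nonneg_left hcross hcpos
    _ = 9/4 * η^3 * ηg * L^2 * (K:ℝ)^3 * σg^2
        + 9/8 * η^3 * ηg * L^2 * (K:ℝ)^3 * (2 * G^2) := by rw [← hσsq]; ring
    _ ≤ 9/4 * η^3 * ηg * L^2 * (K:ℝ)^3 * σg^2 + η * ηg * (K:ℝ) / 4 * G^2 := by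
        linarith [hGpart]
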